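/- Let n ≥ 1. If K is a closed subgroup of SL_n(ℤ₂) whose image under the reduction map SL_n(ℤ₂) → SL_n(ℤ/8ℤ) is all of SL_n(ℤ/8ℤ), then K = SL_n(ℤ₂). (Lemma 2.2.1(a) for p = 2, instantiated at G = SL_n over ℤ₂.) -/

import Mathlib

/-- The `2`-adic topology on `SL_n(ℤ₂)`, induced from the product topology on matrices. -/
instance SLtop2 (n : ℕ) :
    TopologicalSpace (Matrix.SpecialLinearGroup (Fin n) ℤ_[2]) :=
  inferInstanceAs (TopologicalSpace { A : Matrix (Fin n) (Fin n) ℤ_[2] // A.det = 1 })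

/-- The reduction-mod-8 ring homomorphism `ℤ₂ →+* ℤ/8ℤ`. -/
noncomputable def toZMod8 : ℤ_[2] →+* ZMod 8 :=
  (ZMod.castHom (show (8 : ℕ) ∣ 2 ^ 3 by norm_num) (ZMod 8)).comp (PadicInt.toZModPow 3)

open Matrix

namespace Stmt3Aux

variable {n : ℕ}

/-- Congruence of matrices mod `2^j` over `ℤ_[2]`. -/
def Cong (j : ℕ) (X Y : Matrix (Fin n) (Fin n) ℤ_[2]) : Prop :=
  ∃ B, X = Y + ((2:ℤ_[2])^j) • B

lemma cong_of_dvd {j : ℕ} {X Y : Matrix (Fin n) (Fin n) ℤ_[2]}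
    (h : ∀ i k, (2:ℤ_[2])^j ∣ (X i k - Y i k)) : Cong j X Y := by
  refine ⟨Matrix.of fun i k => (h i k).choose, ?_⟩
  ext i k
  have := (h i k).choose_spec
  simp only [Matrix.add_apply, Matrix.smul_apply, Matrix.of_apply, smul_eq_mul]
  linear_combination this

lemma dvd_of_cong {j : ℕ} {X Y : Matrix (Fin n) (Fin n) ℤ_[2]}
    (h : Cong j X Y) (i k : Fin n) : (2:ℤ_[2])^j ∣ (X i k - Y i k) := by
  obtain ⟨B, rfl⟩ := h
  simp only [Matrix.add_apply, Matrix.smul_apply, smul_eq_mul]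
  exact ⟨B i k, by ring⟩

lemma Cong.mono {j j' : ℕ} (hj : j' ≤ j) {X Y : Matrix (Fin n) (Fin n) ℤ_[2]}
    (h : Cong j X Y) : Cong j' X Y := by
  refine cong_of_dvd fun i k => dvd_trans (pow_dvd_pow _ hj) (dvd_of_cong h i k)

lemma Cong.mul_right {j : ℕ} {X Y Z : Matrix (Fin n) (Fin n) ℤ_[2]}
    (h : Cong j X Y) : Cong j (X * Z) (Y * Z) := by
  obtain ⟨B, rfl⟩ := h
  exact ⟨B * Z, by rw [add_mul, smul_mul_assoc]⟩

lemma Cong.trans {j : ℕ} {X Y Z : Matrix (Fin n) (Fin n) ℤ_[2]}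
    (h : Cong j X Y) (h' : Cong j Y Z) : Cong j X Z := by
  obtain ⟨B, rfl⟩ := h
  obtain ⟨B', rfl⟩ := h'
  exact ⟨B' + B, by rw [smul_add, add_assoc]⟩

end Stmt3Aux

namespace Stmt3Aux

open Matrix.SpecialLinearGroup

variable {n : ℕ}

local notation "SL" => Matrix.SpecialLinearGroup (Fin n) ℤ_[2]
local notation "Mat" => Matrix (Fin n) (Fin n) ℤ_[2]

lemma coe_inv_mul (h : SL) : ((h⁻¹ : SL) : Mat) * (h : Mat) = 1 := by
  rw [← Matrix.SpecialLinearGroup.coe_mul, inv_mul_cancel, Matrix.SpecialLinearGroup.coe_one]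

lemma coe_mul_inv (h : SL) : ((h : SL) : Mat) * ((h⁻¹ : SL) : Mat) = 1 := by
  rw [← Matrix.SpecialLinearGroup.coe_mul, mul_inv_cancel, Matrix.SpecialLinearGroup.coe_one]

lemma Cong.inv {j : ℕ} {h u : SL} (hc : Cong j (h : Mat) (u : Mat)) :
    Cong j ((h⁻¹ : SL) : Mat) ((u⁻¹ : SL) : Mat) := by
  obtain ⟨B, hB⟩ := hc
  refine ⟨-(((h⁻¹ : SL) : Mat) * B * ((u⁻¹ : SL) : Mat)), ?_⟩
  have key : ((h⁻¹ : SL) : Mat) * ((u : Mat) - (h : Mat)) * ((u⁻¹ : SL) : Mat)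
      = ((h⁻¹ : SL) : Mat) - ((u⁻¹ : SL) : Mat) := by
    rw [mul_sub, sub_mul, mul_assoc _ (u : Mat) _, coe_mul_inv, mul_one, coe_inv_mul, one_mul]
  have hd : (u : Mat) - (h : Mat) = -(((2:ℤ_[2])^j) • B) := by
    rw [hB]; abel
  rw [hd] at key
  have : ((h⁻¹ : SL) : Mat) * -(((2:ℤ_[2])^j) • B) * ((u⁻¹ : SL) : Mat)
      = ((2:ℤ_[2])^j) • (-(((h⁻¹ : SL) : Mat) * B * ((u⁻¹ : SL) : Mat))) := by
    simp [mul_smul_comm, smul_mul_assoc]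
  rw [this] at key
  rw [key]; abel

end Stmt3Aux

namespace Stmt3Aux

variable {n : ℕ}

local notation "SL" => Matrix.SpecialLinearGroup (Fin n) ℤ_[2]
local notation "Mat" => Matrix (Fin n) (Fin n) ℤ_[2]

lemma dvd8_of_toZMod8_eq {x y : ℤ_[2]} (h : toZMod8 x = toZMod8 y) :
    (2:ℤ_[2])^3 ∣ (x - y) := by
  have h0 : toZMod8 (x - y) = 0 := by rw [map_sub, h, sub_self]
  have h1 : PadicInt.toZModPow 3 (x - y) = 0 := by
    have hinj : ∀ z : ZMod (2^3),
        ZMod.castHom (show (8 : ℕ) ∣ 2 ^ 3 by norm_num) (ZMod 8) z = 0 → z = 0 := by decide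
    exact hinj _ h0
  have h2 : (x - y) ∈ RingHom.ker (PadicInt.toZModPow (p := 2) 3) := h1
  rw [PadicInt.ker_toZModPow, Ideal.mem_span_singleton] at h2
  simpa using h2

lemma base3 (K : Subgroup SL)
    (hsurj : ∀ g : Matrix.SpecialLinearGroup (Fin n) (ZMod 8),
      ∃ k ∈ K, Matrix.SpecialLinearGroup.map toZMod8 k = g) (u : SL) :
    ∃ h ∈ K, Cong 3 (h : Mat) (u : Mat) := by
  obtain ⟨k, hk, hmap⟩ := hsurj (Matrix.SpecialLinearGroup.map toZMod8 u)
  refine ⟨k, hk, cong_of_dvd fun i j => ?_⟩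
  have := congrArg (fun g : Matrix.SpecialLinearGroup (Fin n) (ZMod 8) => (g : Matrix (Fin n) (Fin n) (ZMod 8)) i j) hmap
  simp only [Matrix.SpecialLinearGroup.map_apply_coe, RingHom.mapMatrix_apply,
    Matrix.map_apply] at this
  exact dvd8_of_toZMod8_eq this

end Stmt3Aux

namespace Stmt3Aux

variable {n : ℕ}

local notation "SL" => Matrix.SpecialLinearGroup (Fin n) ℤ_[2]
local notation "Mat" => Matrix (Fin n) (Fin n) ℤ_[2]

lemma toZModPow_eq_of_dvd {j : ℕ} {x y : ℤ_[2]} (h : (2:ℤ_[2])^j ∣ (x - y)) :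
    PadicInt.toZModPow j x = PadicInt.toZModPow j y := by
  rw [← sub_eq_zero, ← map_sub]
  have : (x - y) ∈ RingHom.ker (PadicInt.toZModPow (p := 2) j) := by
    rw [PadicInt.ker_toZModPow, Ideal.mem_span_singleton]
    simpa using h
  exact this

lemma adjust (hn : 1 ≤ n) {m : ℕ} (hm : 1 ≤ m) (M : Mat)
    (hc : Cong m M 1) (hdet : (2:ℤ_[2])^(m+1) ∣ (M.det - 1)) :
    ∃ v : SL, Cong (m+1) (v : Mat) M := by
  set i0 : Fin n := ⟨0, hn⟩
  set c : ℤ_[2] := M.adjugate i0 i0 with hc_def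
  -- c is a unit
  have hMf : M.map (PadicInt.toZModPow (p := 2) 1) = 1 := by
    ext i j
    have h1 : PadicInt.toZModPow (p := 2) 1 (M i j) =
        PadicInt.toZModPow (p := 2) 1 ((1 : Mat) i j) :=
      toZModPow_eq_of_dvd (dvd_trans (pow_dvd_pow _ hm) (dvd_of_cong hc i j))
    rw [Matrix.map_apply, h1]
    by_cases h : i = j <;> simp [Matrix.one_apply, h]
  have hfc : PadicInt.toZModPow (p := 2) 1 c = 1 := by
    have h3 := RingHom.map_adjugate (PadicInt.toZModPow (p := 2) 1) M
    simp only [RingHom.mapMatrix_apply] at h3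
    have h2 : (M.adjugate.map (PadicInt.toZModPow (p := 2) 1)) i0 i0 = 1 := by
      rw [h3, hMf, Matrix.adjugate_one, Matrix.one_apply_eq]
    simpa [Matrix.map_apply] using h2
  have hcu : IsUnit c := by
    by_contra hnc
    have hmem : c ∈ IsLocalRing.maximalIdeal ℤ_[2] := hnc
    rw [PadicInt.maximalIdeal_eq_span_p, Ideal.mem_span_singleton] at hmem
    have hker : c ∈ RingHom.ker (PadicInt.toZModPow (p := 2) 1) := by
      rw [PadicInt.ker_toZModPow, Ideal.mem_span_singleton]
      simpa using hmem
    rw [RingHom.mem_ker, hfc] at hker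
    exact absurd hker (by decide)
  set t : ℤ_[2] := (1 - M.det) * ↑hcu.unit⁻¹ with ht_def
  have ht : (2:ℤ_[2])^(m+1) ∣ t := by
    have h4 : (2:ℤ_[2])^(m+1) ∣ (1 - M.det) := by
      have := dvd_neg.mpr hdet
      rwa [neg_sub] at this
    exact dvd_mul_of_dvd_left h4 _
  set vm : Mat := M + t • Matrix.single i0 i0 (1:ℤ_[2]) with hvm_def
  have hup : vm = M.updateRow i0 (fun j => M i0 j + t * Pi.single (M := fun _ : Fin n => ℤ_[2]) i0 1 j) := by
    ext i j
    by_cases h : i = i0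
    · subst h
      simp [vm, Matrix.updateRow_apply, Matrix.single, Pi.single_apply, eq_comm]
    · simp [vm, Matrix.updateRow_apply, h, Matrix.single, Ne.symm h]
  have hinvmul : (↑hcu.unit⁻¹ : ℤ_[2]) * c = 1 := by
    have h5 := hcu.unit.inv_mul
    rwa [IsUnit.unit_spec] at h5
  have hdetv : vm.det = 1 := by
    have hfun : (fun j => M i0 j + t * Pi.single (M := fun _ : Fin n => ℤ_[2]) i0 1 j)
        = M i0 + t • Pi.single (M := fun _ : Fin n => ℤ_[2]) i0 1 := by
      funext j; simp
    rw [hup, hfun, Matrix.det_updateRow_add, Matrix.updateRow_eq_self, Matrix.det_updateRow_smul,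
      ← Matrix.adjugate_apply, ← hc_def]
    have htc : t * c = 1 - M.det := by
      rw [ht_def, mul_assoc, hinvmul, mul_one]
    rw [htc]; ring
  obtain ⟨s, hs⟩ := ht
  refine ⟨⟨vm, hdetv⟩, ⟨s • Matrix.single i0 i0 (1:ℤ_[2]), ?_⟩⟩
  show vm = M + _
  rw [smul_smul, ← hs]

end Stmt3Aux

namespace Stmt3Aux

variable {n : ℕ}

local notation "SL" => Matrix.SpecialLinearGroup (Fin n) ℤ_[2]
local notation "Mat" => Matrix (Fin n) (Fin n) ℤ_[2]

lemma trace_even {j : ℕ} {A : Mat}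
    (h : Matrix.det ((1:Mat) + ((2:ℤ_[2])^(j+1)) • A) = 1) : (2:ℤ_[2]) ∣ A.trace := by
  have e := Matrix.det_one_add_smul ((2:ℤ_[2])^(j+1)) A
  obtain ⟨P, e⟩ : ∃ P : ℤ_[2], ((1:Mat) + ((2:ℤ_[2])^(j+1)) • A).det
      = 1 + A.trace * 2^(j+1) + P * (2^(j+1))^2 := ⟨_, e⟩
  have h0 : (2:ℤ_[2])^(j+1) * (A.trace + P * 2^(j+1)) = 0 := by
    linear_combination h - e
  have h1 : A.trace + P * 2^(j+1) = 0 := by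
    rcases mul_eq_zero.mp h0 with h2 | h2
    · exact absurd h2 (pow_ne_zero _ two_ne_zero)
    · exact h2
  exact ⟨-(P * 2^j), by linear_combination h1⟩

lemma det_almost_one {l : ℕ} {A : Mat} (htr : (2:ℤ_[2]) ∣ A.trace) :
    (2:ℤ_[2])^(l+2) ∣ (Matrix.det ((1:Mat) + ((2:ℤ_[2])^(l+1)) • A) - 1) := by
  have e := Matrix.det_one_add_smul ((2:ℤ_[2])^(l+1)) A
  obtain ⟨P, e⟩ : ∃ P : ℤ_[2], ((1:Mat) + ((2:ℤ_[2])^(l+1)) • A).det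
      = 1 + A.trace * 2^(l+1) + P * (2^(l+1))^2 := ⟨_, e⟩
  obtain ⟨s, hs⟩ := htr
  exact ⟨s + P * 2^l, by linear_combination e + 2^(l+1) * hs⟩

end Stmt3Aux

namespace Stmt3Aux

variable {n : ℕ}

local notation "SL" => Matrix.SpecialLinearGroup (Fin n) ℤ_[2]
local notation "Mat" => Matrix (Fin n) (Fin n) ℤ_[2]

lemma key (hn : 1 ≤ n) (K : Subgroup SL)
    (hbase : ∀ u : SL, ∃ h ∈ K, Cong 3 (h : Mat) (u : Mat)) :
    ∀ d, ∀ u : SL, Cong (d+2) (u : Mat) 1 → ∃ h ∈ K, Cong (d+3) (h : Mat) (u : Mat) := by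
  intro d
  induction d with
  | zero => exact fun u _ => hbase u
  | succ d IH =>
    intro u hu
    obtain ⟨A, hA⟩ := hu
    have hA' : (u : Mat) = 1 + ((2:ℤ_[2])^(d+3)) • A := hA
    have hdet1 : Matrix.det ((1:Mat) + ((2:ℤ_[2])^(d+3)) • A) = 1 := by
      rw [← hA']; exact u.2
    have htr : (2:ℤ_[2]) ∣ A.trace := trace_even (j := d+2) hdet1
    set M : Mat := 1 + ((2:ℤ_[2])^(d+2)) • A with hM
    have hMcong : Cong (d+2) M 1 := ⟨A, by rw [hM, add_comm 1]⟩
    have hMdet : (2:ℤ_[2])^(d+3) ∣ (M.det - 1) := det_almost_one (l := d+1) htr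
    obtain ⟨v, hv⟩ := adjust hn (by omega) M hMcong hMdet
    have hvcong : Cong (d+2) (v : Mat) 1 := (hv.mono (by omega)).trans hMcong
    obtain ⟨h, hK, hh⟩ := IH v hvcong
    refine ⟨h * h, K.mul_mem hK hK, ?_⟩
    have hhM : Cong (d+3) (h : Mat) M := hh.trans hv
    obtain ⟨B, hB⟩ := hhM
    set D : Mat := A + (2:ℤ_[2]) • B with hD
    have hh2 : (h : Mat) = 1 + ((2:ℤ_[2])^(d+2)) • D := by
      rw [hB, hM, hD]
      module
    have hsq : ((h * h : SL) : Mat)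
        = 1 + ((2:ℤ_[2])^(d+3)) • D + ((2:ℤ_[2])^(2*d+4)) • (D * D) := by
      rw [Matrix.SpecialLinearGroup.coe_mul, hh2]
      simp only [mul_add, add_mul, one_mul, mul_one, Matrix.smul_mul, Matrix.mul_smul, smul_smul]
      module
    refine ⟨B + ((2:ℤ_[2])^d) • (D * D), ?_⟩
    rw [hsq, hA', hD]
    module

end Stmt3Aux

namespace Stmt3Aux

variable {n : ℕ}

local notation "SL" => Matrix.SpecialLinearGroup (Fin n) ℤ_[2]
local notation "Mat" => Matrix (Fin n) (Fin n) ℤ_[2]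

lemma approx (hn : 1 ≤ n) (K : Subgroup SL)
    (hbase : ∀ u : SL, ∃ h ∈ K, Cong 3 (h : Mat) (u : Mat)) :
    ∀ m, ∀ g : SL, ∃ k ∈ K, Cong (m+3) (k : Mat) (g : Mat) := by
  intro m
  induction m with
  | zero => exact fun g => hbase g
  | succ m IH =>
    intro g
    obtain ⟨k, hkK, hk⟩ := IH g
    have hu : Cong (m+3) ((k * g⁻¹ : SL) : Mat) 1 := by
      obtain ⟨B, hB⟩ := hk
      refine ⟨B * ((g⁻¹ : SL) : Mat), ?_⟩
      rw [Matrix.SpecialLinearGroup.coe_mul, hB, add_mul, coe_mul_inv, Matrix.smul_mul]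
    obtain ⟨h, hhK, hh⟩ := key hn K hbase (m+1) (k * g⁻¹) hu
    refine ⟨h⁻¹ * k, K.mul_mem (K.inv_mem hhK) hkK, ?_⟩
    have h2 := (Cong.inv hh).mul_right (Z := (k : Mat))
    have hgrp : ((k * g⁻¹)⁻¹ * k : SL) = g := by group
    rw [← Matrix.SpecialLinearGroup.coe_mul, ← Matrix.SpecialLinearGroup.coe_mul, hgrp] at h2
    exact h2

end Stmt3Aux

/-- Let `n ≥ 1`. If `K` is a closed subgroup of `SL_n(ℤ₂)` whose image under
the reduction map `SL_n(ℤ₂) → SL_n(ℤ/8ℤ)` is all of `SL_n(ℤ/8ℤ)`, then `K = SL_n(ℤ₂)`. -/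
theorem stmt3 (n : ℕ) (hn : 1 ≤ n)
    (K : Subgroup (Matrix.SpecialLinearGroup (Fin n) ℤ_[2]))
    (hclosed : IsClosed (K : Set (Matrix.SpecialLinearGroup (Fin n) ℤ_[2])))
    (hsurj : ∀ g : Matrix.SpecialLinearGroup (Fin n) (ZMod 8),
      ∃ k ∈ K, Matrix.SpecialLinearGroup.map toZMod8 k = g) :
    K = ⊤ := by
  have hbase := Stmt3Aux.base3 K hsurj
  have happrox := Stmt3Aux.approx hn K hbase
  rw [eq_top_iff]
  intro g _
  choose k hkK hck using fun m => happrox m g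
  have hbound : ∀ m : ℕ, ∀ i j : Fin n,
      ‖(k m : Matrix (Fin n) (Fin n) ℤ_[2]) i j - (g : Matrix (Fin n) (Fin n) ℤ_[2]) i j‖
        ≤ (1/2 : ℝ)^m := by
    intro m i j
    have hd : (2:ℤ_[2])^m ∣ ((k m : Matrix (Fin n) (Fin n) ℤ_[2]) i j
        - (g : Matrix (Fin n) (Fin n) ℤ_[2]) i j) :=
      dvd_trans (pow_dvd_pow _ (by omega)) (Stmt3Aux.dvd_of_cong (hck m) i j)
    have := (PadicInt.norm_le_pow_iff_mem_span_pow (p := 2) _ m).mpr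
      (Ideal.mem_span_singleton.mpr (by simpa using hd))
    calc ‖_‖ ≤ ((2:ℕ) : ℝ) ^ (-m : ℤ) := this
      _ = (1/2 : ℝ)^m := by
          rw [_root_.zpow_neg, zpow_natCast]
          simp [one_div, inv_pow]
  have htendszero : Filter.Tendsto (fun m : ℕ => ((1:ℝ)/2)^m) Filter.atTop (nhds 0) :=
    tendsto_pow_atTop_nhds_zero_of_lt_one (by norm_num) (by norm_num)
  have htends : Filter.Tendsto (fun m => k m) Filter.atTop (nhds g) := by
    refine tendsto_subtype_rng.mpr ?_
    refine tendsto_pi_nhds.mpr fun i => ?_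
    refine tendsto_pi_nhds.mpr fun j => ?_
    rw [tendsto_iff_norm_sub_tendsto_zero]
    exact squeeze_zero (fun m => norm_nonneg _) (fun m => hbound m i j) htendszero
  have := mem_closure_of_tendsto htends (Filter.Eventually.of_forall hkK)
  rwa [hclosed.closure_eq] at this
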